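/- Let L be the covector set of an oriented matroid without loops on a finite set E, let R ∈ T, e ∈ E, let P be a tope with P_e = −R_e, and let F ∈ W_{R,e}(P). Then the tope C₀ := F∘R lies in (0̂,P)^△_{R,e} with [C₀,P]_R = star(F), and C₀ is the greatest element, with respect to ⪯_R, of the set of all C ∈ (0̂,P)^△_{R,e} for which there exists X ∈ L with X ≤ F and [C,P]_R = star(X). -/

import Mathlib

open Finset

/-- Sign vectors on ground set `E`. -/
abbrev SignVec (E : Type*) := E → SignType

namespace SignVec

/-- The componentwise partial order on sign vectors generated by `0 < +` and `0 < -`. -/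
def le {E : Type*} (X Y : SignVec E) : Prop := ∀ e, X e = 0 ∨ X e = Y e

/-- Composition of sign vectors. -/
def comp {E : Type*} (X Y : SignVec E) : SignVec E := fun e => if X e = 0 then Y e else X e

end SignVec

/-- The covector axioms for an oriented matroid given by its set of covectors. -/
structure IsOrientedMatroid {E : Type*} (L : Set (SignVec E)) : Prop where
  zero_mem : (0 : SignVec E) ∈ L
  neg_mem : ∀ X ∈ L, (-X) ∈ L
  comp_mem : ∀ X ∈ L, ∀ Y ∈ L, SignVec.comp X Y ∈ L
  elim : ∀ X ∈ L, ∀ Y ∈ L, ∀ e, X e = -Y e → X e ≠ 0 →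
    ∃ Z ∈ L, Z e = 0 ∧ ∀ f, ¬(X f = -Y f ∧ X f ≠ 0) → Z f = SignVec.comp X Y f

/-- The set of topes (maximal covectors) of `L`. -/
def Topes {E : Type*} (L : Set (SignVec E)) : Set (SignVec E) :=
  {T | T ∈ L ∧ ∀ X ∈ L, SignVec.le T X → X = T}

/-- `L` has no loops: every tope is nowhere zero. -/
def Loopless {E : Type*} (L : Set (SignVec E)) : Prop :=
  ∀ T ∈ Topes L, ∀ e, T e ≠ 0

/-- The separator of two (co)vectors. -/
def sep {E : Type*} (P Q : SignVec E) : Set E := {e | P e = -Q e ∧ P e ≠ 0}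

/-- The star of a covector: all topes above it. -/
def star {E : Type*} (L : Set (SignVec E)) (X : SignVec E) : Set (SignVec E) :=
  {T ∈ Topes L | SignVec.le X T}

/-- The closed interval `[Q,P]_R` in the tope poset with base tope `R`. -/
def intervalR {E : Type*} (L : Set (SignVec E)) (R Q P : SignVec E) : Set (SignVec E) :=
  {T ∈ Topes L | sep R Q ⊆ sep R T ∧ sep R T ⊆ sep R P}

/-- The open interval `(0̂, P)_{R,e}` in `T_{R,e}`. -/
def openInt {E : Type*} (L : Set (SignVec E)) (R : SignVec E) (e : E) (P : SignVec E) :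
    Set (SignVec E) :=
  {Q ∈ Topes L | Q e = -R e ∧ sep R Q ⊂ sep R P}

/-- The subposet `(0̂,P)^△_{R,e}` of `(0̂,P)_{R,e}`. -/
def openIntTri {E : Type*} (L : Set (SignVec E)) (R : SignVec E) (e : E) (P : SignVec E) :
    Set (SignVec E) :=
  {Q ∈ openInt L R e P | ∃ X ∈ L, intervalR L R Q P = star L X}

/-- Ordering a set of topes by `P ⪯_R Q ↔ Sep(R,P) ⊆ Sep(R,Q)`. -/
def sepPreorder {E : Type*} (R : SignVec E) (S : Set (SignVec E)) : Preorder S where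
  le P Q := sep R P.1 ⊆ sep R Q.1
  lt P Q := sep R P.1 ⊆ sep R Q.1 ∧ ¬ sep R Q.1 ⊆ sep R P.1
  le_refl _ := subset_rfl
  le_trans _ _ _ h₁ h₂ := fun _ hx => h₂ (h₁ hx)
  lt_iff_le_not_ge _ _ := Iff.rfl

/-- Ordering a set of covectors by the componentwise order on sign vectors. -/
def covPreorder {E : Type*} (S : Set (SignVec E)) : Preorder S where
  le X Y := SignVec.le X.1 Y.1
  lt X Y := SignVec.le X.1 Y.1 ∧ ¬ SignVec.le Y.1 X.1
  le_refl _ := fun _ => Or.inr rfl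
  le_trans X Y Z h₁ h₂ := fun e => by
    rcases h₁ e with h | h
    · exact Or.inl h
    · rcases h₂ e with h' | h'
      · exact Or.inl (h.trans h')
      · exact Or.inr (h.trans h')
  lt_iff_le_not_ge _ _ := Iff.rfl

open CategoryTheory in
/-- The geometric realization of the order complex of a poset, realized as the topological
realization of the nerve of the poset viewed as a category. -/
noncomputable def posetRealization (α : Type) [Preorder α] : TopCat :=
  SSet.toTop.obj (nerve α)

/-- The monomial `∏_{e ∈ Sep(P,Q)} U_e`, the `(P,Q)` entry of the Varchenko matrix. -/
noncomputable def vchEntry {E : Type*} [Fintype E] (K : Type*) [Field K] (P Q : SignVec E) :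
    MvPolynomial E K :=
  ∏ e ∈ Finset.univ.filter fun e => P e = -Q e ∧ P e ≠ 0, MvPolynomial.X e

/-- The Varchenko matrix of `L`, with rows and columns indexed by the topes of `L`. -/
noncomputable def varchenko {E : Type*} [Fintype E] (K : Type*) [Field K]
    (L : Set (SignVec E)) : Matrix ↥(Topes L) ↥(Topes L) (MvPolynomial E K) :=
  Matrix.of fun P Q => vchEntry K P.1 Q.1

/-- `a(F) = ∏_{e : F_e = 0} U_e`. -/
noncomputable def aF {E : Type*} [Fintype E] (K : Type*) [Field K] (F : SignVec E) :
    MvPolynomial E K :=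
  ∏ e ∈ Finset.univ.filter fun e => F e = 0, MvPolynomial.X e

/-- `T^{F,e}`: the topes `P` such that `F` is the greatest covector `G ∈ L` with
`G ≤ P` and `G e = 0`. -/
def TFe {E : Type*} (L : Set (SignVec E)) (F : SignVec E) (e : E) : Set (SignVec E) :=
  {P ∈ Topes L | F ∈ L ∧ SignVec.le F P ∧ F e = 0 ∧
    ∀ G ∈ L, SignVec.le G P → G e = 0 → SignVec.le G F}

/-- The poset `W_{R,e}(P)`. -/
def Wset {E : Type*} (L : Set (SignVec E)) (R : SignVec E) (e : E) (P : SignVec E) :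
    Set (SignVec E) :=
  {F ∈ L | F ≠ 0 ∧ SignVec.le F P ∧ F ≠ P ∧ F e = -R e ∧
    (∀ f, f ∉ sep P R → F f = P f) ∧ ∀ f ∈ sep P R, f ≠ e → F f = 0 ∨ F f = P f}

open scoped Classical in
/-- `μ` is, for every base tope `B` of `L`, the Möbius function `μ(0̂, ·)` of the poset
`T_{B,e}` (computed in its incidence algebra over `ℤ`): it satisfies the defining
recursion `∑_{0̂ ≤ z ≤ Q} μ(0̂,z) = 0` for every `Q > 0̂`, where `μ(0̂,0̂) = 1`. -/
def IsMoebius {E : Type*} [Fintype E] (L : Set (SignVec E)) (e : E)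
    (μ : SignVec E → SignVec E → ℤ) : Prop :=
  ∀ B ∈ Topes L, ∀ Q ∈ Topes L, Q e = -B e →
    1 + ∑ Q' ∈ Finset.univ.filter
      (fun Q' : SignVec E => Q' ∈ Topes L ∧ Q' e = -B e ∧ sep B Q' ⊆ sep B Q), μ Q' B = 0

/-- `L` is graded of rank `r`: every maximal chain of covectors (necessarily running from
the zero covector to a tope) has length `r`, i.e. `r+1` elements. -/
def GradedOfRank {α : Type*} (L : Set (SignVec α)) (r : ℕ) : Prop :=
  ∀ c : Finset (SignVec α), ↑c ⊆ L → IsChain SignVec.le (c : Set (SignVec α)) →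
    (0 : SignVec α) ∈ c → (∃ T ∈ c, T ∈ Topes L) →
    (∀ d : Finset (SignVec α), ↑d ⊆ L → IsChain SignVec.le (d : Set (SignVec α)) →
      c ⊆ d → c = d) →
    c.card = r + 1

/-- The restriction `L|_A` of `L` to a subset `A` of the ground set. -/
def restrictOM {E : Type*} (L : Set (SignVec E)) (A : Set E) : Set (SignVec ↥A) :=
  (fun X (a : ↥A) => X a.1) '' L

/-- `e` is the maximal element of `Sep(P,Q)`. -/
def maxSep {E : Type*} [LinearOrder E] (e : E) (P Q : SignVec E) : Prop :=
  e ∈ sep P Q ∧ ∀ f ∈ sep P Q, f ≤ e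

open scoped Classical in
/-- The `(Q,R)` entry of the matrix `𝓜^e`. -/
noncomputable def mEntry {E : Type*} [Fintype E] [LinearOrder E] (K : Type*) [Field K]
    (μ : SignVec E → SignVec E → ℤ) (e : E) (Q R : SignVec E) : MvPolynomial E K :=
  if Q = R then 1
  else if Q e = -1 ∧ R e = 1 ∧ maxSep e Q R then
    ((-μ Q R : ℤ) : MvPolynomial E K) * vchEntry K Q R
  else if Q e = 1 ∧ R e = -1 ∧ maxSep e Q R then
    ((-μ (-Q) (-R) : ℤ) : MvPolynomial E K) * vchEntry K Q R
  else 0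


private lemma st_eq : ∀ a b : SignType, a ≠ 0 → b ≠ 0 → a ≠ -b → a = b := by decide

private lemma st_ne_neg_self : ∀ a : SignType, a ≠ 0 → a ≠ -a := by decide

private lemma st_neg_ne_zero : ∀ a : SignType, a ≠ 0 → -a ≠ 0 := by decide

private lemma st_neg_swap : ∀ a b : SignType, a = -b ↔ b = -a := by decide

/-- Lemma 3.1 (iii): `F ∘ R` is the unique maximal element of the fiber
`α_P⁻¹(W_{R,e}(P)_{≤ F})`. -/
theorem comp_base_greatest_in_fiber {E : Type*} [Fintype E] (L : Set (SignVec E))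
    (hOM : IsOrientedMatroid L) (hloop : Loopless L)
    (R P F : SignVec E) (e : E) (hR : R ∈ Topes L) (hP : P ∈ Topes L) (hPe : P e = -R e)
    (hF : F ∈ Wset L R e P) :
    (SignVec.comp F R ∈ openIntTri L R e P ∧
      intervalR L R (SignVec.comp F R) P = star L F) ∧
    ∀ C ∈ openIntTri L R e P,
      (∃ X ∈ L, SignVec.le X F ∧ intervalR L R C P = star L X) →
        sep R C ⊆ sep R (SignVec.comp F R) := by

  obtain ⟨hFL, hF0, hFP, hFneP, hFe, hOut, hIn⟩ := hF
  have hRne : ∀ f, R f ≠ 0 := hloop R hR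
  have hPne : ∀ f, P f ≠ 0 := hloop P hP
  have topeOf : ∀ X ∈ L, (∀ f, X f ≠ 0) → X ∈ Topes L := fun X hX h =>
    ⟨hX, fun Y hY hle => funext fun f => ((hle f).resolve_left (h f)).symm⟩
  have compRne : ∀ X : SignVec E, ∀ f, SignVec.comp X R f ≠ 0 := by
    intro X f
    unfold SignVec.comp
    split
    · exact hRne f
    · assumption
  have leCompR : ∀ X : SignVec E, SignVec.le X (SignVec.comp X R) := by
    intro X f
    unfold SignVec.comp
    split
    · exact Or.inl (by assumption)
    · exact Or.inr rfl
  have sepCompR : ∀ X : SignVec E, sep R (SignVec.comp X R) = sep X R := by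
    intro X
    ext f
    simp only [sep, SignVec.comp, Set.mem_setOf_eq]
    by_cases h : X f = 0
    · simp only [h, if_true]
      constructor
      · rintro ⟨h1, h2⟩; exact absurd h1 (st_ne_neg_self _ (hRne f))
      · rintro ⟨-, h2⟩; exact absurd rfl h2
    · simp only [h, if_false]
      constructor
      · rintro ⟨h1, -⟩; exact ⟨(st_neg_swap _ _).mpr h1, h⟩
      · rintro ⟨h1, -⟩; exact ⟨(st_neg_swap _ _).mp h1, hRne f⟩
  have hFP' : ∀ f, F f ≠ 0 → F f = P f := fun f h => (hFP f).resolve_left h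
  have hFzero : ∀ f, F f = 0 → f ∈ sep P R := by
    intro f h
    by_contra hn
    have h2 := hOut f hn
    rw [h] at h2
    exact hPne f h2.symm
  -- sep F R ⊆ sep R P
  have hsub : sep F R ⊆ sep R P := by
    rintro f ⟨h1, h2⟩
    have hp : P f = -R f := (hFP' f h2) ▸ h1
    exact ⟨(st_neg_swap _ _).mp hp, hRne f⟩
  -- F ne P witness gives strictness
  have hstrict : sep F R ⊂ sep R P := by
    refine ⟨hsub, fun hrev => ?_⟩
    have : ∃ f, F f ≠ P f := by
      by_contra hc
      push_neg at hc
      exact hFneP (funext hc)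
    obtain ⟨f, hf⟩ := this
    have hf0 : F f = 0 := (hFP f).resolve_right hf
    have hfP : f ∈ sep P R := hFzero f hf0
    have hfRP : f ∈ sep R P := ⟨(st_neg_swap _ _).mp hfP.1, hRne f⟩
    obtain ⟨h1, h2⟩ := hrev hfRP
    exact h2 hf0
  have hC0tope : SignVec.comp F R ∈ Topes L :=
    topeOf _ (hOM.comp_mem F hFL R hR.1) (compRne F)
  have hC0e : SignVec.comp F R e = -R e := by
    have : F e ≠ 0 := by
      rw [hFe]; exact st_neg_ne_zero _ (hRne e)
    unfold SignVec.comp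
    rw [if_neg this, hFe]
  have hC0sep : sep R (SignVec.comp F R) = sep F R := sepCompR F
  -- interval = star
  have hIntStar : intervalR L R (SignVec.comp F R) P = star L F := by
    ext T
    constructor
    · rintro ⟨hT, hCT, hTP⟩
      refine ⟨hT, fun f => ?_⟩
      have hTne : ∀ g, T g ≠ 0 := hloop T hT
      by_cases h0 : F f = 0
      · exact Or.inl h0
      right
      by_cases hr : F f = -R f
      · have : f ∈ sep R T := (hC0sep ▸ hCT) ⟨hr, h0⟩
        rw [hr, ← (st_neg_swap _ _).mpr this.1]
      · have hFR : F f = R f := st_eq _ _ h0 (hRne f) hr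
        have : f ∉ sep R T := by
          intro hmem
          have hmem' := hTP hmem
          have : R f = -P f := hmem'.1
          rw [← hFP' f h0, hFR] at this
          exact st_ne_neg_self _ (hRne f) this
        have hTR : T f = R f := by
          rcases Classical.em (T f = -R f) with h | h
          · exact absurd ⟨(st_neg_swap _ _).mp h, hRne f⟩ this
          · exact st_eq _ _ (hTne f) (hRne f) h
        rw [hFR, hTR]
    · rintro ⟨hT, hFT⟩
      have hTne : ∀ g, T g ≠ 0 := hloop T hT
      have hFT' : ∀ f, F f ≠ 0 → F f = T f := fun f h => (hFT f).resolve_left h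
      refine ⟨hT, ?_, ?_⟩
      · rw [hC0sep]
        rintro f ⟨h1, h2⟩
        exact ⟨(st_neg_swap _ _).mp ((hFT' f h2) ▸ h1), hRne f⟩
      · rintro f ⟨h1, h2⟩
        by_contra hn
        have hPf : P f ≠ -R f := by
          intro hc
          exact hn ⟨(st_neg_swap _ _).mp hc, hRne f⟩
        have hPR : P f = R f := st_eq _ _ (hPne f) (hRne f) hPf
        have hF0 : F f ≠ 0 := by
          intro hc
          exact hPf (hFzero f hc).1
        have : T f = R f := by rw [← hFT' f hF0, hFP' f hF0, hPR]
        rw [this] at h1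
        exact st_ne_neg_self _ (hRne f) h1
  constructor
  · exact ⟨⟨⟨hC0tope, hC0e, hC0sep ▸ hstrict⟩, F, hFL, hIntStar⟩, hIntStar⟩
  · rintro C ⟨⟨hCtope, hCe, hCsep⟩, -⟩ ⟨X, hXL, hXF, hint⟩
    have hXtope : SignVec.comp X R ∈ Topes L :=
      topeOf _ (hOM.comp_mem X hXL R hR.1) (compRne X)
    have hmem : SignVec.comp X R ∈ star L X := ⟨hXtope, leCompR X⟩
    rw [← hint] at hmem
    obtain ⟨-, hCC, -⟩ := hmem
    rw [sepCompR X] at hCC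
    have hXFsub : sep X R ⊆ sep F R := by
      rintro f ⟨h1, h2⟩
      have : X f = F f := (hXF f).resolve_left h2
      exact ⟨this ▸ h1, this ▸ h2⟩
    rw [hC0sep]
    exact hCC.trans hXFsub
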